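/- Let A = [a_1 ⋯ a_n] ∈ ℝ^{m×n} be a matrix whose columns all have Euclidean norm one, and suppose ρ(A) < 0. Then every v ∈ ℝ^m with ‖v‖₂ ≤ |ρ(A)| belongs to the convex hull {Ax : x ∈ Δ_{n-1}} of the columns of A. -/

import Mathlib

noncomputable section
open Matrix

/-- The Euclidean norm of a vector in ℝᵐ. -/
def eNorm {m : ℕ} (y : Fin m → ℝ) : ℝ := Real.sqrt (∑ k, y k ^ 2)

/-- The condition measure `ρ(A) := max_{‖y‖₂ = 1} min_{i} ⟨a_i, y⟩`,
where `a_1, …, a_n` are the columns of `A`. -/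
def rho {m n : ℕ} (A : Matrix (Fin m) (Fin n) ℝ) : ℝ :=
  sSup {t | ∃ y : Fin m → ℝ, eNorm y = 1 ∧ t = ⨅ i, ∑ k, A k i * y k}

lemma eNorm_eq_norm {m : ℕ} (y : EuclideanSpace ℝ (Fin m)) : eNorm y = ‖y‖ := by
  rw [EuclideanSpace.norm_eq, eNorm]
  congr 1
  exact Finset.sum_congr rfl fun k _ => (sq_abs _).symm

lemma inner_eq_sum {m : ℕ} (x y : EuclideanSpace ℝ (Fin m)) :
    (inner ℝ x y : ℝ) = ∑ k, x k * y k := by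
  rw [PiLp.inner_apply]; exact Finset.sum_congr rfl fun k _ => by simp [mul_comm]

/-- Separation lemma: if every unit vector `w` has `⨅ i, ⟪a i, w⟫ ≤ -‖v‖`, then `v` lies in
the convex hull of the `a i`. -/
lemma mem_hull_of_inf_le {m n : ℕ} (hn : 0 < n) (a : Fin n → EuclideanSpace ℝ (Fin m))
    (v : EuclideanSpace ℝ (Fin m))
    (h : ∀ w : EuclideanSpace ℝ (Fin m), ‖w‖ = 1 →
      (⨅ i, (inner ℝ (a i) w : ℝ)) ≤ -‖v‖) :
    v ∈ convexHull ℝ (Set.range a) := by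
  haveI : Nonempty (Fin n) := ⟨⟨0, hn⟩⟩
  by_contra hout
  obtain ⟨f, u, hfv, hfb⟩ := geometric_hahn_banach_point_closed
    (convex_convexHull ℝ _) ((Set.finite_range a).isCompact_convexHull (𝕜 := ℝ)).isClosed hout
  obtain ⟨y, hy⟩ := (InnerProductSpace.toDual ℝ (EuclideanSpace ℝ (Fin m))).surjective f
  have hfy : ∀ x : EuclideanSpace ℝ (Fin m), f x = (inner ℝ y x : ℝ) := fun x => by
    rw [← hy]; rfl
  have hmem : ∀ i, a i ∈ convexHull ℝ (Set.range a) :=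
    fun i => subset_convexHull ℝ _ (Set.mem_range_self i)
  have hyne : y ≠ 0 := by
    intro h0
    have h1 := hfb (a ⟨0, hn⟩) (hmem _)
    rw [hfy, h0, inner_zero_left] at h1
    rw [hfy, h0, inner_zero_left] at hfv
    exact absurd (h1.trans hfv) (lt_irrefl _)
  have hc : (0:ℝ) < ‖y‖ := norm_pos_iff.2 hyne
  set w : EuclideanSpace ℝ (Fin m) := ‖y‖⁻¹ • y with hw
  have hwnorm : ‖w‖ = 1 := by
    rw [hw, norm_smul, norm_inv, norm_norm, inv_mul_cancel₀ hc.ne']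
  have hterm : ∀ i, u * ‖y‖⁻¹ ≤ (inner ℝ (a i) w : ℝ) := by
    intro i
    have h1 : u < f (a i) := hfb _ (hmem i)
    rw [hfy] at h1
    rw [hw, real_inner_smul_right, real_inner_comm]
    have := mul_le_mul_of_nonneg_left h1.le (inv_nonneg.2 hc.le)
    linarith [this]
  have ht_ge : u * ‖y‖⁻¹ ≤ ⨅ i, (inner ℝ (a i) w : ℝ) := le_ciInf hterm
  have hwv : (inner ℝ w v : ℝ) < u * ‖y‖⁻¹ := by
    have h1 : (inner ℝ y v : ℝ) < u := by rw [← hfy]; exact hfv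
    rw [hw, real_inner_smul_left]
    have := mul_lt_mul_of_pos_left h1 (inv_pos.2 hc)
    linarith [this]
  have habs : |(inner ℝ w v : ℝ)| ≤ ‖w‖ * ‖v‖ := abs_real_inner_le_norm _ _
  rw [hwnorm, one_mul] at habs
  have h2 : -‖v‖ ≤ (inner ℝ w v : ℝ) := by
    linarith [neg_abs_le (inner ℝ w v : ℝ)]
  have := h w hwnorm
  linarith

theorem ball_subset_convex_hull_of_rho_neg {m n : ℕ} (hn : 0 < n)
    (A : Matrix (Fin m) (Fin n) ℝ)
    (hcols : ∀ i, eNorm (fun k => A k i) = 1) (hneg : rho A < 0)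
    (v : Fin m → ℝ) (hv : eNorm v ≤ |rho A|) :
    ∃ x : Fin n → ℝ, (∀ j, 0 ≤ x j) ∧ (∑ j, |x j|) = 1 ∧ A.mulVec x = v := by

  haveI : Nonempty (Fin n) := ⟨⟨0, hn⟩⟩
  set a : Fin n → EuclideanSpace ℝ (Fin m) :=
    fun i => (WithLp.equiv 2 (Fin m → ℝ)).symm (fun k => A k i) with ha
  set v' : EuclideanSpace ℝ (Fin m) := (WithLp.equiv 2 (Fin m → ℝ)).symm v with hv'
  -- the set S defining rho is bounded above by 1
  have hbdd : BddAbove {t | ∃ y : Fin m → ℝ, eNorm y = 1 ∧ t = ⨅ i, ∑ k, A k i * y k} := by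
    refine ⟨1, fun t ht => ?_⟩
    obtain ⟨y, hy1, rfl⟩ := ht
    set y' : EuclideanSpace ℝ (Fin m) := (WithLp.equiv 2 (Fin m → ℝ)).symm y with hy'
    have hby : BddBelow (Set.range fun i => ∑ k, A k i * y k) :=
      (Set.finite_range _).bddBelow
    refine le_trans (ciInf_le hby ⟨0, hn⟩) ?_
    have heq : ∑ k, A k ⟨0, hn⟩ * y k = (inner ℝ (a ⟨0, hn⟩) y' : ℝ) := by
      rw [inner_eq_sum]; rfl
    rw [heq]
    have h1 : (inner ℝ (a ⟨0, hn⟩) y' : ℝ) ≤ ‖a ⟨0, hn⟩‖ * ‖y'‖ := real_inner_le_norm _ _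
    have h2 : ‖a ⟨0, hn⟩‖ = 1 := by rw [← eNorm_eq_norm]; exact hcols _
    have h3 : ‖y'‖ = 1 := by rw [← eNorm_eq_norm]; exact hy1
    rw [h2, h3, one_mul] at h1
    exact h1
  -- key: v' lies in the convex hull of the columns
  have hvmem : v' ∈ convexHull ℝ (Set.range a) := by
    refine mem_hull_of_inf_le hn a v' (fun w hw => ?_)
    have htmem : (⨅ i, (inner ℝ (a i) w : ℝ)) ∈
        {t | ∃ y : Fin m → ℝ, eNorm y = 1 ∧ t = ⨅ i, ∑ k, A k i * y k} := by
      refine ⟨WithLp.equiv 2 (Fin m → ℝ) w, ?_, ?_⟩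
      · rw [show (WithLp.equiv 2 (Fin m → ℝ)) w = (w : Fin m → ℝ) from rfl]
        rw [eNorm_eq_norm w]; exact hw
      · refine iInf_congr fun i => ?_
        rw [inner_eq_sum]; rfl
    have h1 : (⨅ i, (inner ℝ (a i) w : ℝ)) ≤ rho A := le_csSup hbdd htmem
    have h2 : ‖v'‖ ≤ -rho A := by
      rw [← eNorm_eq_norm]
      rw [abs_of_neg hneg] at hv
      exact hv
    linarith
  -- extract the convex combination
  set L : (Fin n → ℝ) →ₗ[ℝ] EuclideanSpace ℝ (Fin m) :=
    (WithLp.linearEquiv 2 ℝ (Fin m → ℝ)).symm.toLinearMap.comp A.mulVecLin with hL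
  have hbasis : ∀ i, L (fun j => @ite ℝ (i = j) (Classical.propDecidable _) (1:ℝ) 0) = a i := by
    intro i
    show (WithLp.equiv 2 (Fin m → ℝ)).symm (A.mulVec (fun j => @ite ℝ (i = j) (Classical.propDecidable _) (1:ℝ) 0)) = _
    rw [ha]
    congr 1
    funext k
    simp [Matrix.mulVec, dotProduct]
  have himg : convexHull ℝ (Set.range a) = L '' stdSimplex ℝ (Fin n) := by
    rw [← convexHull_basis_eq_stdSimplex, L.image_convexHull, ← Set.range_comp]
    congr 1
    ext b
    simp only [Set.mem_range, Function.comp_apply]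
    exact exists_congr fun i => ⟨fun h => by convert (hbasis i).trans h, fun h => (hbasis i).symm.trans (by convert h)⟩
  rw [himg] at hvmem
  obtain ⟨x, ⟨hx0, hx1⟩, hxv⟩ := hvmem
  refine ⟨x, hx0, ?_, ?_⟩
  · rw [← hx1]
    exact Finset.sum_congr rfl fun j _ => abs_of_nonneg (hx0 j)
  · exact congrArg WithLp.ofLp hxv

end
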